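/- arXiv:alg-geom/9506002 — 4 statements merged into one kernel-verified Lean document; each statement's English description precedes it below -/
import Mathlib

section
/- Let f : ℝ² → ℝ be a nonconstant real polynomial function of degree d ≥ 1 in two variables with only finitely many critical points. Then for every admissible radius R (i.e., every R > 0 such that all critical points of f lie in the open disk of radius R), the index i of grad f around the circle of radius R satisfies |i| ≤ d − 1. -/
open MvPolynomial Filter

/-- Evaluation of a polynomial in two variables at the point `(x, y)`. -/
noncomputable def evalP (f : MvPolynomial (Fin 2) ℝ) (x y : ℝ) : ℝ :=
  MvPolynomial.eval ![x, y] f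

/-- `p` is a critical point of `f`: both partial derivatives vanish at `p`. -/
def IsCriticalPt (f : MvPolynomial (Fin 2) ℝ) (p : ℝ × ℝ) : Prop :=
  evalP (pderiv 0 f) p.1 p.2 = 0 ∧ evalP (pderiv 1 f) p.1 p.2 = 0

/-- `u(t) = f_x(R cos t, R sin t)`. -/
noncomputable def uFun (f : MvPolynomial (Fin 2) ℝ) (R t : ℝ) : ℝ :=
  evalP (pderiv 0 f) (R * Real.cos t) (R * Real.sin t)

/-- `v(t) = f_y(R cos t, R sin t)`. -/
noncomputable def vFun (f : MvPolynomial (Fin 2) ℝ) (R t : ℝ) : ℝ :=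
  evalP (pderiv 1 f) (R * Real.cos t) (R * Real.sin t)

/-- The index of `grad f` around the circle of radius `R`, as the winding-number
integral `(1/(2π)) ∫₀^{2π} (u v' - v u')/(u² + v²) dt`. -/
noncomputable def gradIndex (f : MvPolynomial (Fin 2) ℝ) (R : ℝ) : ℝ :=
  (1 / (2 * Real.pi)) *
    ∫ t in (0:ℝ)..(2 * Real.pi),
      (uFun f R t * deriv (vFun f R) t - vFun f R t * deriv (uFun f R) t) /
        ((uFun f R t) ^ 2 + (vFun f R t) ^ 2)


lemma logderiv_multiset (a : ℂ) (ha : a ≠ 0) (s : Multiset ℂ) (z : ℂ) (hz : ∀ r ∈ s, z ≠ r) :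
    Polynomial.eval z (Polynomial.derivative
        (Polynomial.C a * (s.map fun r => Polynomial.X - Polynomial.C r).prod)) /
      Polynomial.eval z (Polynomial.C a * (s.map fun r => Polynomial.X - Polynomial.C r).prod)
      = (s.map fun r => (z - r)⁻¹).sum := by
  induction s using Multiset.induction with
  | empty => simp
  | cons r s ih =>
    have hzr : z - r ≠ 0 := sub_ne_zero.2 (hz r (Multiset.mem_cons_self r s))
    have hz' : ∀ x ∈ s, z ≠ x := fun x hx => hz x (Multiset.mem_cons_of_mem hx)
    have hQ : Polynomial.eval z
        (Polynomial.C a * (s.map fun r => Polynomial.X - Polynomial.C r).prod) ≠ 0 := by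
      rw [Polynomial.eval_mul, Polynomial.eval_C, Polynomial.eval_multiset_prod]
      refine mul_ne_zero ha ?_
      rw [Multiset.map_map]
      refine Multiset.prod_ne_zero ?_
      intro h0
      simp only [Multiset.mem_map, Function.comp] at h0
      obtain ⟨x, hx, hex⟩ := h0
      rw [Polynomial.eval_sub, Polynomial.eval_X, Polynomial.eval_C] at hex
      exact sub_ne_zero.2 (hz' x hx) hex
    rw [Multiset.map_cons, Multiset.prod_cons, Multiset.map_cons, Multiset.sum_cons]
    set Q := Polynomial.C a * (s.map fun r => Polynomial.X - Polynomial.C r).prod with hQdef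
    have hre : Polynomial.C a * ((Polynomial.X - Polynomial.C r) *
        (s.map fun r => Polynomial.X - Polynomial.C r).prod) = (Polynomial.X - Polynomial.C r) * Q := by
      ring
    rw [hre, Polynomial.derivative_mul, Polynomial.derivative_sub, Polynomial.derivative_X,
      Polynomial.derivative_C, sub_zero, one_mul, Polynomial.eval_add, Polynomial.eval_mul,
      Polynomial.eval_mul, Polynomial.eval_sub, Polynomial.eval_X, Polynomial.eval_C]
    rw [← ih hz']
    have hevalQ : Polynomial.eval z Q =
        a * Polynomial.eval z ((s.map fun r => Polynomial.X - Polynomial.C r).prod) := by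
      rw [hQdef, Polynomial.eval_mul, Polynomial.eval_C]
    simp only [Polynomial.eval_sub, Polynomial.eval_mul, Polynomial.eval_X, Polynomial.eval_C]
    field_simp
    rw [hevalQ]

open Complex Metric

lemma ci_sub_inv {r : ℂ} (h : ‖r‖ ≠ 1) :
    CircleIntegrable (fun z => (z - r)⁻¹) 0 1 := by
  refine circleIntegrable_sub_inv_iff.mpr (Or.inr ?_)
  simp at h ⊢
  simpa [Complex.dist_eq] using h

lemma ci_multiset (s : Multiset ℂ) (h : ∀ r ∈ s, ‖r‖ ≠ 1) :
    CircleIntegrable (fun z => (s.map fun r => (z - r)⁻¹).sum) 0 1 := by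
  induction s using Multiset.induction with
  | empty => simpa using circleIntegrable_const (0 : ℂ) 0 1
  | cons r s ih =>
    have : (fun z => ((r ::ₘ s).map fun r => (z - r)⁻¹).sum)
        = (fun z => (z - r)⁻¹) + (fun z => (s.map fun r => (z - r)⁻¹).sum) := by
      funext z; simp
    rw [this]
    exact (ci_sub_inv (h r (Multiset.mem_cons_self r s))).add
      (ih fun x hx => h x (Multiset.mem_cons_of_mem hx))

lemma circleIntegral.integral_add' {f g : ℂ → ℂ} (hf : CircleIntegrable f 0 1)
    (hg : CircleIntegrable g 0 1) :
    (∮ z in C(0, 1), (f z + g z)) = (∮ z in C(0, 1), f z) + ∮ z in C(0, 1), g z := by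
  have := circleIntegral.integral_sub (c := 0) (R := 1) hf hg.neg
  simp only [Pi.neg_apply, sub_neg_eq_add] at this
  rw [this]
  have h0 : (∮ z in C(0, 1), (-g) z) = ∮ z in C(0, 1), (-1 : ℂ) * g z := by
    apply circleIntegral.integral_congr zero_le_one; intro z _; simp
  rw [show (∮ (z : ℂ) in C(0, 1), -g z) = ∮ (z : ℂ) in C(0, 1), (-1 : ℂ) * g z by
    apply circleIntegral.integral_congr zero_le_one; intro z _; simp,
    circleIntegral.integral_const_mul]
  ring

lemma int_outside {r : ℂ} (h : 1 < ‖r‖) :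
    (∮ z in C(0, 1), (z - r)⁻¹) = 0 := by
  apply circleIntegral_eq_zero_of_differentiable_on_off_countable zero_le_one
    Set.countable_empty
  · intro z hz
    have hzr : z - r ≠ 0 := by
      intro h0
      have heq : ‖z‖ = ‖r‖ := by rw [sub_eq_zero.mp h0]
      have hz1 : ‖z‖ ≤ 1 := by
        simpa [Complex.dist_eq] using mem_closedBall.mp hz
      linarith
    exact (((differentiableAt_id (𝕜 := ℂ)).sub_const r).inv hzr).continuousAt.continuousWithinAt
  · intro z hz
    have hzr : z - r ≠ 0 := by
      intro h0
      have : ‖z‖ = ‖r‖ := by rw [sub_eq_zero.mp h0]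
      have hz1 : ‖z‖ < 1 := by simpa [Complex.dist_eq] using hz.1
      linarith
    exact ((differentiableAt_id (𝕜 := ℂ)).sub_const r).inv hzr

open Real in
lemma int_multiset (s : Multiset ℂ) (h : ∀ r ∈ s, ‖r‖ ≠ 1) :
    (∮ z in C(0, 1), (s.map fun r => (z - r)⁻¹).sum) =
      (Multiset.card (s.filter (fun r => ‖r‖ < 1)) : ℂ) * (2 * π * I) := by
  induction s using Multiset.induction with
  | empty => simp [circleIntegral]
  | cons r s ih =>
    have hr := h r (Multiset.mem_cons_self r s)
    have h' : ∀ x ∈ s, ‖x‖ ≠ 1 := fun x hx => h x (Multiset.mem_cons_of_mem hx)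
    have step : (∮ z in C(0, 1), ((r ::ₘ s).map fun r => (z - r)⁻¹).sum)
        = (∮ z in C(0, 1), (z - r)⁻¹) + ∮ z in C(0, 1), (s.map fun r => (z - r)⁻¹).sum := by
      rw [← circleIntegral.integral_add' (ci_sub_inv hr) (ci_multiset s h')]
      apply circleIntegral.integral_congr zero_le_one
      intro z _; simp
    rw [step, ih h']
    by_cases hlt : ‖r‖ < 1
    · rw [circleIntegral.integral_sub_inv_of_mem_ball (by simpa [Complex.dist_eq] using hlt)]
      rw [Multiset.filter_cons_of_pos (p := fun x => ‖x‖ < 1) s hlt]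
      push_cast [Multiset.card_cons]
      ring
    · have : 1 < ‖r‖ := lt_of_le_of_ne (not_lt.mp hlt) (Ne.symm hr)
      rw [int_outside this, Multiset.filter_cons_of_neg (p := fun x => ‖x‖ < 1) s hlt]
      ring

lemma fsum_eq (m : Fin 2 →₀ ℕ) : (m.sum fun _ e => e) = m 0 + m 1 := by
  rw [Finsupp.sum_fintype _ _ (fun _ => rfl), Fin.sum_univ_two]

lemma totalDegree_pderiv_le' (i : Fin 2) (f : MvPolynomial (Fin 2) ℝ) (k : ℕ)
    (hf : f.totalDegree ≤ k + 1) : (pderiv i f).totalDegree ≤ k := by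
  conv_lhs => rw [f.as_sum]
  rw [map_sum]
  refine (totalDegree_finset_sum _ _).trans (Finset.sup_le fun m hm => ?_)
  rw [pderiv_monomial]
  rcases Nat.eq_zero_or_pos (m i) with h0 | hpos
  · simp [h0]
  · refine (totalDegree_monomial_le _ _).trans ?_
    have hm' : (m.sum fun _ e => e) ≤ k + 1 := (le_totalDegree hm).trans hf
    refine le_trans (le_of_eq (fsum_eq _)) ?_
    rw [fsum_eq] at hm'
    rw [Finsupp.tsub_apply, Finsupp.tsub_apply]
    fin_cases i <;> simp [Finsupp.single_apply] at hpos ⊢ <;> omega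

noncomputable def gP (f : MvPolynomial (Fin 2) ℝ) : MvPolynomial (Fin 2) ℂ :=
  MvPolynomial.map Complex.ofRealHom (pderiv 0 f) +
    MvPolynomial.C Complex.I * MvPolynomial.map Complex.ofRealHom (pderiv 1 f)

lemma gP_totalDegree (f : MvPolynomial (Fin 2) ℝ) (k : ℕ) (hf : f.totalDegree ≤ k + 1) :
    (gP f).totalDegree ≤ k := by
  have h0 := totalDegree_pderiv_le' 0 f k hf
  have h1 := totalDegree_pderiv_le' 1 f k hf
  have hmap : ∀ p : MvPolynomial (Fin 2) ℝ, p.totalDegree ≤ k →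
      (MvPolynomial.map Complex.ofRealHom p).totalDegree ≤ k := by
    intro p hp
    refine le_trans (Finset.sup_le fun m hm => ?_) hp
    exact le_totalDegree (MvPolynomial.support_map_subset _ _ hm)
  refine (totalDegree_add _ _).trans (max_le (hmap _ h0) ?_)
  exact (totalDegree_mul _ _).trans (by simpa using hmap _ h1)

lemma eval_map_ofReal (p : MvPolynomial (Fin 2) ℝ) (w : Fin 2 → ℝ) :
    MvPolynomial.eval (fun j => ((w j : ℝ) : ℂ)) (MvPolynomial.map Complex.ofRealHom p)
      = ((MvPolynomial.eval w p : ℝ) : ℂ) := by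
  rw [MvPolynomial.eval_map]
  have := MvPolynomial.eval₂_comp_left (Complex.ofRealHom) (RingHom.id ℝ) w p
  simp only [RingHom.comp_id] at this
  exact this.symm

lemma eval_gP (f : MvPolynomial (Fin 2) ℝ) (R t : ℝ) :
    MvPolynomial.eval ![((R * Real.cos t : ℝ) : ℂ), ((R * Real.sin t : ℝ) : ℂ)] (gP f)
      = ((uFun f R t : ℝ) : ℂ) + Complex.I * ((vFun f R t : ℝ) : ℂ) := by
  have hv : (![((R * Real.cos t : ℝ) : ℂ), ((R * Real.sin t : ℝ) : ℂ)] : Fin 2 → ℂ)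
      = fun j => ((![R * Real.cos t, R * Real.sin t] j : ℝ) : ℂ) := by
    funext j; fin_cases j <;> simp
  rw [gP, map_add, map_mul, hv, eval_map_ofReal, eval_map_ofReal, eval_C]
  rfl

noncomputable def QP (f : MvPolynomial (Fin 2) ℝ) (R : ℝ) (n : ℕ) : Polynomial ℂ :=
  (gP f).support.sum fun m => Polynomial.C ((gP f).coeff m) *
    (Polynomial.C ((R : ℂ) / 2) * (Polynomial.X ^ 2 + 1)) ^ (m 0) *
    (Polynomial.C ((R : ℂ) / (2 * Complex.I)) * (Polynomial.X ^ 2 - 1)) ^ (m 1) *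
    Polynomial.X ^ (n - (m 0 + m 1))

lemma QP_natDegree (f : MvPolynomial (Fin 2) ℝ) (R : ℝ) (n : ℕ)
    (hn : (gP f).totalDegree ≤ n) : (QP f R n).natDegree ≤ 2 * n := by
  refine Polynomial.natDegree_sum_le_of_forall_le _ _ fun m hm => ?_
  have hm' : m 0 + m 1 ≤ n := by
    have := (le_totalDegree hm).trans hn
    rwa [fsum_eq] at this
  have hA : (Polynomial.C ((R : ℂ) / 2) * (Polynomial.X ^ 2 + 1) : Polynomial ℂ).natDegree ≤ 2 := by
    refine Polynomial.natDegree_mul_le.trans ?_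
    simp only [Polynomial.natDegree_C, zero_add]
    exact (Polynomial.natDegree_add_le _ _).trans (by simp)
  have hB : (Polynomial.C ((R : ℂ) / (2 * Complex.I)) * (Polynomial.X ^ 2 - 1) :
      Polynomial ℂ).natDegree ≤ 2 := by
    refine Polynomial.natDegree_mul_le.trans ?_
    simp only [Polynomial.natDegree_C, zero_add]
    exact (Polynomial.natDegree_sub_le _ _).trans (by simp)
  calc (Polynomial.C ((gP f).coeff m) *
        (Polynomial.C ((R : ℂ) / 2) * (Polynomial.X ^ 2 + 1)) ^ (m 0) *
        (Polynomial.C ((R : ℂ) / (2 * Complex.I)) * (Polynomial.X ^ 2 - 1)) ^ (m 1) *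
        Polynomial.X ^ (n - (m 0 + m 1))).natDegree
      ≤ (Polynomial.C ((gP f).coeff m) *
        (Polynomial.C ((R : ℂ) / 2) * (Polynomial.X ^ 2 + 1)) ^ (m 0) *
        (Polynomial.C ((R : ℂ) / (2 * Complex.I)) * (Polynomial.X ^ 2 - 1)) ^ (m 1)).natDegree
        + (n - (m 0 + m 1)) :=
        Polynomial.natDegree_mul_le.trans (by gcongr; exact Polynomial.natDegree_X_pow_le _)
    _ ≤ (0 + 2 * m 0 + 2 * m 1) + (n - (m 0 + m 1)) := by
        gcongr
        refine Polynomial.natDegree_mul_le.trans ?_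
        gcongr
        · refine Polynomial.natDegree_mul_le.trans ?_
          simp only [Polynomial.natDegree_C, zero_add]
          exact (Polynomial.natDegree_pow_le).trans (by nlinarith [hA])
        · exact (Polynomial.natDegree_pow_le).trans (by nlinarith [hB])
    _ ≤ 2 * n := by omega

lemma QP_eval (f : MvPolynomial (Fin 2) ℝ) (R : ℝ) (n : ℕ)
    (hn : (gP f).totalDegree ≤ n) (t : ℝ) :
    (QP f R n).eval (Complex.exp (t * Complex.I)) =
      Complex.exp (t * Complex.I) ^ n *
        (((uFun f R t : ℝ) : ℂ) + Complex.I * ((vFun f R t : ℝ) : ℂ)) := by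
  set z : ℂ := Complex.exp (t * Complex.I) with hz
  have hzval : z = Complex.cos t + Complex.sin t * Complex.I := Complex.exp_mul_I _
  have h1 : ((R : ℂ) / 2) * (z ^ 2 + 1) = ((R * Real.cos t : ℝ) : ℂ) * z := by
    rw [hzval]
    push_cast
    linear_combination ((R : ℂ) / 2) * (Complex.sin t) ^ 2 * Complex.I_sq
      - ((R : ℂ) / 2) * (Complex.sin_sq_add_cos_sq (t : ℂ))
  have h2 : ((R : ℂ) / (2 * Complex.I)) * (z ^ 2 - 1) = ((R * Real.sin t : ℝ) : ℂ) * z := by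
    rw [hzval, div_mul_eq_mul_div, div_eq_iff (by simp [Complex.I_ne_zero] :
      (2 * Complex.I : ℂ) ≠ 0)]
    push_cast
    linear_combination (-(R : ℂ) * (Complex.sin t) ^ 2) * Complex.I_sq
      + (R : ℂ) * (Complex.sin_sq_add_cos_sq (t : ℂ))
  have hrhs : ((uFun f R t : ℝ) : ℂ) + Complex.I * ((vFun f R t : ℝ) : ℂ)
      = ∑ m ∈ (gP f).support, (gP f).coeff m *
          (((R * Real.cos t : ℝ) : ℂ) ^ (m 0) * ((R * Real.sin t : ℝ) : ℂ) ^ (m 1)) := by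
    rw [← eval_gP f R t, eval_eq']
    refine Finset.sum_congr rfl fun m _ => ?_
    rw [Fin.prod_univ_two]
    congr 1 <;> norm_num
  rw [QP, Polynomial.eval_finset_sum, hrhs, Finset.mul_sum]
  refine Finset.sum_congr rfl fun m hm => ?_
  have hm' : m 0 + m 1 ≤ n := by
    have := (le_totalDegree hm).trans hn
    rwa [fsum_eq] at this
  simp only [Polynomial.eval_mul, Polynomial.eval_pow, Polynomial.eval_add, Polynomial.eval_sub,
    Polynomial.eval_one, Polynomial.eval_C, Polynomial.eval_X]
  rw [h1, h2, mul_pow, mul_pow]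
  rw [show z ^ n = z ^ (m 0) * z ^ (m 1) * z ^ (n - (m 0 + m 1)) by
    rw [← pow_add, ← pow_add]; congr 1; omega]
  ring

theorem index_abs_le_degree_sub_one
    (f : MvPolynomial (Fin 2) ℝ) (d : ℕ) (hd : f.totalDegree = d) (hd1 : 1 ≤ d)
    (hfin : {p : ℝ × ℝ | IsCriticalPt f p}.Finite)
    (R : ℝ) (hR : 0 < R)
    (hadm : ∀ p : ℝ × ℝ, IsCriticalPt f p → p.1 ^ 2 + p.2 ^ 2 < R ^ 2)
    (i : ℤ) (hi : (i : ℝ) = gradIndex f R) :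
    |i| ≤ (d : ℤ) - 1 := by
  classical
  set n : ℕ := d - 1 with hn
  have hdn : d = n + 1 := by omega
  have hgdeg : (gP f).totalDegree ≤ n := gP_totalDegree f n (by rw [hd, hdn])
  set Q : Polynomial ℂ := QP f R n with hQdef
  set w : ℝ → ℂ := fun t => ((uFun f R t : ℝ) : ℂ) + Complex.I * ((vFun f R t : ℝ) : ℂ)
    with hwdef
  have hwre : ∀ t, (w t).re = uFun f R t := by
    intro t; simp [hwdef]
  have hwim : ∀ t, (w t).im = vFun f R t := by
    intro t; simp [hwdef]
  have hw : ∀ t, w t ≠ 0 := by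
    intro t h0
    have hcrit : ¬ IsCriticalPt f (R * Real.cos t, R * Real.sin t) := by
      intro hc
      have h2 := hadm _ hc
      simp only at h2
      nlinarith [Real.sin_sq_add_cos_sq t, sq_nonneg R]
    apply hcrit
    constructor
    · have h1 : (w t).re = 0 := by rw [h0]; simp
      rw [hwre] at h1; exact h1
    · have h1 : (w t).im = 0 := by rw [h0]; simp
      rw [hwim] at h1; exact h1
  have hQeval : ∀ t : ℝ, Q.eval (Complex.exp (t * Complex.I)) =
      Complex.exp ((t : ℂ) * Complex.I) ^ n * w t := fun t => QP_eval f R n hgdeg t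
  have hQe_ne : ∀ t : ℝ, Q.eval (Complex.exp ((t : ℂ) * Complex.I)) ≠ 0 := by
    intro t
    rw [hQeval t]
    exact mul_ne_zero (pow_ne_zero _ (Complex.exp_ne_zero _)) (hw t)
  have hQ0 : Q ≠ 0 := by
    intro h
    apply hQe_ne 0
    rw [h]; simp
  have hsphere_ne : ∀ z : ℂ, ‖z‖ = 1 → Q.eval z ≠ 0 := by
    intro z hz
    have hze : z = Complex.exp ((z.arg : ℂ) * Complex.I) := by
      conv_lhs => rw [← Complex.norm_mul_exp_arg_mul_I z]
      rw [hz]; simp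
    rw [hze]; exact hQe_ne z.arg
  have hroots1 : ∀ r ∈ Q.roots, ‖r‖ ≠ 1 := by
    intro r hr h1
    exact hsphere_ne r h1 ((Polynomial.mem_roots hQ0).mp hr)
  have hcard : Multiset.card Q.roots = Q.natDegree :=
    Polynomial.splits_iff_card_roots.mp (IsAlgClosed.splits Q)
  have hfact := Polynomial.C_leadingCoeff_mul_prod_multiset_X_sub_C hcard
  -- the complex-differentiable lift
  set E : ℂ → ℂ := fun s => Complex.exp (s * (-(n:ℂ) * Complex.I)) *
    Q.eval (Complex.exp (s * Complex.I)) with hEdef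
  set E' : ℂ → ℂ := fun s => Complex.exp (s * (-(n:ℂ) * Complex.I)) * (-(n:ℂ) * Complex.I) *
      Q.eval (Complex.exp (s * Complex.I)) + Complex.exp (s * (-(n:ℂ) * Complex.I)) *
      (Q.derivative.eval (Complex.exp (s * Complex.I)) * (Complex.exp (s * Complex.I) * Complex.I))
    with hE'def
  have hE : ∀ s : ℂ, HasDerivAt E (E' s) s := by
    intro s
    have h1 : HasDerivAt (fun s : ℂ => Complex.exp (s * (-(n:ℂ) * Complex.I)))
        (Complex.exp (s * (-(n:ℂ) * Complex.I)) * (-(n:ℂ) * Complex.I)) s :=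
      (hasDerivAt_mul_const (-(n:ℂ) * Complex.I)).cexp
    have h2 : HasDerivAt (fun s : ℂ => Q.eval (Complex.exp (s * Complex.I)))
        (Q.derivative.eval (Complex.exp (s * Complex.I)) *
          (Complex.exp (s * Complex.I) * Complex.I)) s := by
      have hinner : HasDerivAt (fun s : ℂ => Complex.exp (s * Complex.I))
          (Complex.exp (s * Complex.I) * Complex.I) s :=
        (hasDerivAt_mul_const Complex.I).cexp
      exact (Q.hasDerivAt _).comp s hinner
    exact h1.mul h2
  have hEw : ∀ t : ℝ, E (t : ℂ) = w t := by
    intro t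
    show Complex.exp ((t:ℂ) * (-(n:ℂ) * Complex.I)) *
      Q.eval (Complex.exp ((t:ℂ) * Complex.I)) = w t
    rw [hQeval t, ← mul_assoc, ← Complex.exp_nat_mul, ← Complex.exp_add,
      show ((t:ℂ) * (-(n:ℂ) * Complex.I) + n * ((t:ℂ) * Complex.I)) = 0 by ring,
      Complex.exp_zero, one_mul]
  have hEt : ∀ t : ℝ, HasDerivAt (fun y : ℝ => E (y : ℂ)) (E' t) t :=
    fun t => (hE t).comp_ofReal
  have hu : ∀ t : ℝ, HasDerivAt (uFun f R) ((E' t).re) t := by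
    intro t
    have h : HasDerivAt (fun y : ℝ => (E (y : ℂ)).re) ((E' t).re) t :=
      Complex.reCLM.hasFDerivAt.comp_hasDerivAt t (hEt t)
    have heq : (fun y : ℝ => (E (y : ℂ)).re) = uFun f R := by
      funext y
      rw [hEw y]
      exact hwre y
    rwa [heq] at h
  have hv : ∀ t : ℝ, HasDerivAt (vFun f R) ((E' t).im) t := by
    intro t
    have h : HasDerivAt (fun y : ℝ => (E (y : ℂ)).im) ((E' t).im) t :=
      Complex.imCLM.hasFDerivAt.comp_hasDerivAt t (hEt t)
    have heq : (fun y : ℝ => (E (y : ℂ)).im) = vFun f R := by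
      funext y
      rw [hEw y]
      exact hwim y
    rwa [heq] at h
  have hIntEq : ∀ t : ℝ,
      (uFun f R t * deriv (vFun f R) t - vFun f R t * deriv (uFun f R) t) /
        ((uFun f R t) ^ 2 + (vFun f R t) ^ 2) = (E' t / w t).im := by
    intro t
    rw [(hu t).deriv, (hv t).deriv, Complex.div_im]
    have hnormSq : Complex.normSq (w t) = uFun f R t ^ 2 + vFun f R t ^ 2 := by
      rw [Complex.normSq_apply, hwre, hwim]; ring
    rw [hwre, hwim, hnormSq]
    ring
  have hG : ∀ t : ℝ, E' t / w t = -(n:ℂ) * Complex.I +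
      (Complex.exp ((t:ℂ) * Complex.I) * Complex.I) *
        (Q.derivative.eval (Complex.exp ((t:ℂ) * Complex.I)) /
          Q.eval (Complex.exp ((t:ℂ) * Complex.I))) := by
    intro t
    have hwE : w t = Complex.exp ((t:ℂ) * (-(n:ℂ) * Complex.I)) *
        Q.eval (Complex.exp ((t:ℂ) * Complex.I)) := (hEw t).symm
    rw [hwE, hE'def]
    field_simp [Complex.exp_ne_zero, hQe_ne t]
  -- continuity
  have hexpc : Continuous fun t : ℝ => Complex.exp ((t:ℂ) * Complex.I) :=
    Complex.continuous_exp.comp (Complex.continuous_ofReal.mul continuous_const)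
  have hFc : Continuous fun t : ℝ =>
      (Complex.exp ((t:ℂ) * Complex.I) * Complex.I) *
        (Q.derivative.eval (Complex.exp ((t:ℂ) * Complex.I)) /
          Q.eval (Complex.exp ((t:ℂ) * Complex.I))) := by
    refine (hexpc.mul continuous_const).mul (Continuous.div ?_ ?_ ?_)
    · exact (Q.derivative.continuous_aeval).comp hexpc
    · exact (Q.continuous_aeval).comp hexpc
    · exact fun t => hQe_ne t
  -- the circle integral
  set F : ℂ → ℂ := fun z => Q.derivative.eval z / Q.eval z with hFdef
  have hFeqOn : Set.EqOn F (fun z => (Q.roots.map fun r => (z - r)⁻¹).sum)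
      (Metric.sphere (0:ℂ) 1) := by
    intro z hz
    have habs : ‖z‖ = 1 := by
      simpa [Complex.dist_eq] using hz
    have hzr : ∀ r ∈ Q.roots, z ≠ r := by
      intro r hr he
      exact hroots1 r hr (by rw [← he]; exact habs)
    have hlc : Q.leadingCoeff ≠ 0 := Polynomial.leadingCoeff_ne_zero.mpr hQ0
    have hld := logderiv_multiset Q.leadingCoeff hlc Q.roots z hzr
    rw [hfact] at hld
    exact hld
  set N : ℕ := Multiset.card (Q.roots.filter fun r => ‖r‖ < 1) with hNdef
  have hFcirc : (∮ z in C(0,1), F z) = (N : ℂ) * (2 * Real.pi * Complex.I) := by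
    rw [circleIntegral.integral_congr zero_le_one hFeqOn, int_multiset Q.roots hroots1]
  have hNle : N ≤ 2 * n := by
    refine le_trans (Multiset.card_le_card (Multiset.filter_le _ _)) ?_
    rw [hcard]
    exact QP_natDegree f R n hgdeg
  -- evaluate the interval integral
  have hCI : (∮ z in C(0,1), F z) =
      ∫ t in (0:ℝ)..(2 * Real.pi), (Complex.exp ((t:ℂ) * Complex.I) * Complex.I) *
        (Q.derivative.eval (Complex.exp ((t:ℂ) * Complex.I)) /
          Q.eval (Complex.exp ((t:ℂ) * Complex.I))) := by
    rw [circleIntegral]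
    refine intervalIntegral.integral_congr fun θ _ => ?_
    rw [deriv_circleMap]
    have hcm : circleMap 0 1 θ = Complex.exp ((θ:ℂ) * Complex.I) := by
      simp [circleMap]
    rw [hcm]
    simp [smul_eq_mul]
    rfl
  have hIntIm : ∫ t in (0:ℝ)..(2 * Real.pi),
      ((Complex.exp ((t:ℂ) * Complex.I) * Complex.I) *
        (Q.derivative.eval (Complex.exp ((t:ℂ) * Complex.I)) /
          Q.eval (Complex.exp ((t:ℂ) * Complex.I)))).im = (N : ℝ) * (2 * Real.pi) := by
    have hcomm := Complex.imCLM.intervalIntegral_comp_comm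
      (hFc.intervalIntegrable (μ := MeasureTheory.volume) (0:ℝ) (2 * Real.pi))
    simp only [Complex.imCLM_apply] at hcomm
    rw [hcomm, ← hCI, hFcirc]
    simp
  have hIval : ∫ t in (0:ℝ)..(2 * Real.pi),
      (uFun f R t * deriv (vFun f R) t - vFun f R t * deriv (uFun f R) t) /
        ((uFun f R t) ^ 2 + (vFun f R t) ^ 2)
      = -(n:ℝ) * (2 * Real.pi) + (N : ℝ) * (2 * Real.pi) := by
    have hfun : ∀ t : ℝ,
        (uFun f R t * deriv (vFun f R) t - vFun f R t * deriv (uFun f R) t) /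
          ((uFun f R t) ^ 2 + (vFun f R t) ^ 2)
        = -(n:ℝ) + ((Complex.exp ((t:ℂ) * Complex.I) * Complex.I) *
            (Q.derivative.eval (Complex.exp ((t:ℂ) * Complex.I)) /
              Q.eval (Complex.exp ((t:ℂ) * Complex.I)))).im := by
      intro t
      rw [hIntEq t, hG t]
      simp [Complex.add_im]
    rw [intervalIntegral.integral_congr (g := fun t => -(n:ℝ) +
        ((Complex.exp ((t:ℂ) * Complex.I) * Complex.I) *
          (Q.derivative.eval (Complex.exp ((t:ℂ) * Complex.I)) /
            Q.eval (Complex.exp ((t:ℂ) * Complex.I)))).im) (fun t _ => hfun t)]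
    have himc : Continuous fun t : ℝ =>
        ((Complex.exp ((t:ℂ) * Complex.I) * Complex.I) *
          (Q.derivative.eval (Complex.exp ((t:ℂ) * Complex.I)) /
            Q.eval (Complex.exp ((t:ℂ) * Complex.I)))).im :=
      Complex.continuous_im.comp hFc
    rw [intervalIntegral.integral_add (intervalIntegrable_const)
      (himc.intervalIntegrable _ _)]
    rw [intervalIntegral.integral_const, hIntIm]
    simp
    ring
  -- conclude
  have hpi : (2 * Real.pi) ≠ 0 := by positivity
  have hiNn : (i : ℝ) = (N : ℝ) - (n : ℝ) := by
    rw [hi, gradIndex, hIval]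
    field_simp
    ring
  have hiZ : i = (N : ℤ) - (n : ℤ) := by exact_mod_cast hiNn
  have hd' : (d : ℤ) = (n : ℤ) + 1 := by exact_mod_cast hdn
  have hNle' : (N : ℤ) ≤ 2 * (n : ℤ) := by exact_mod_cast hNle
  rw [hd', abs_le]
  constructor <;> omega
end

section
/- Let F ∈ ℝ[x,y] be a nonzero homogeneous polynomial of degree d ≥ 1, let (a,b) ∈ ℝ² \ {(0,0)}, and set ℓ = b·x − a·y. Suppose ℓ divides F with multiplicity exactly m ≥ 1 (that is, ℓ^m divides F but ℓ^{m+1} does not). Then the polynomial x·F_y − y·F_x is nonzero and ℓ divides it with multiplicity exactly m − 1 (that is, ℓ^{m−1} divides x·F_y − y·F_x but ℓ^m does not). -/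
open MvPolynomial

lemma aux_prime_lin (a b : ℝ) (hab : ¬(a = 0 ∧ b = 0)) :
    Prime (C b * X 0 - C a * X 1 : MvPolynomial (Fin 2) ℝ) := by
  have hs : a ^ 2 + b ^ 2 ≠ 0 := by
    rcases not_and_or.mp hab with h | h
    · positivity
    · positivity
  set s : ℝ := a ^ 2 + b ^ 2 with hsdef
  have key : ∀ p q : ℝ, (C p * (C b * X 0 - C a * X 1) + C q * (C a * X 0 + C b * X 1)
      : MvPolynomial (Fin 2) ℝ) = C (p * b + q * a) * X 0 + C (q * b - p * a) * X 1 := by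
    intro p q
    rw [C_add, C_mul, C_mul, C_sub, C_mul, C_mul]
    ring
  have key2 : ∀ p q : ℝ, (C p * (C (b/s) * X 0 + C (a/s) * X 1)
        + C q * (C (-(a/s)) * X 0 + C (b/s) * X 1) : MvPolynomial (Fin 2) ℝ)
      = C (p * (b/s) - q * (a/s)) * X 0 + C (p * (a/s) + q * (b/s)) * X 1 := by
    intro p q
    rw [C_sub, C_mul, C_mul, C_add, C_mul, C_mul, C_neg]
    ring
  have e1 : (C (b/s) * (C b * X 0 - C a * X 1) + C (a/s) * (C a * X 0 + C b * X 1)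
      : MvPolynomial (Fin 2) ℝ) = X 0 := by
    rw [key, show (b/s*b + a/s*a : ℝ) = 1 by field_simp; ring,
      show (a/s*b - b/s*a : ℝ) = 0 by field_simp; ring]
    simp
  have e2 : (C (-(a/s)) * (C b * X 0 - C a * X 1) + C (b/s) * (C a * X 0 + C b * X 1)
      : MvPolynomial (Fin 2) ℝ) = X 1 := by
    rw [key, show (-(a/s)*b + b/s*a : ℝ) = 0 by field_simp; ring,
      show (b/s*b - -(a/s)*a : ℝ) = 1 by field_simp; ring]
    simp
  have e3 : (C b * (C (b/s) * X 0 + C (a/s) * X 1)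
      - C a * (C (-(a/s)) * X 0 + C (b/s) * X 1) : MvPolynomial (Fin 2) ℝ) = X 0 := by
    rw [sub_eq_add_neg, ← neg_mul, ← C_neg, key2,
      show (b*(b/s) - -a*(a/s) : ℝ) = 1 by field_simp; ring,
      show (b*(a/s) + -a*(b/s) : ℝ) = 0 by field_simp; ring]
    simp
  have e4 : (C a * (C (b/s) * X 0 + C (a/s) * X 1)
      + C b * (C (-(a/s)) * X 0 + C (b/s) * X 1) : MvPolynomial (Fin 2) ℝ) = X 1 := by
    rw [key2, show (a*(b/s) - b*(a/s) : ℝ) = 0 by field_simp; ring,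
      show (a*(a/s) + b*(b/s) : ℝ) = 1 by field_simp; ring]
    simp
  set v : Fin 2 → MvPolynomial (Fin 2) ℝ := ![C b * X 0 - C a * X 1, C a * X 0 + C b * X 1]
    with hv
  set w : Fin 2 → MvPolynomial (Fin 2) ℝ :=
    ![C (b/s) * X 0 + C (a/s) * X 1, C (-(a/s)) * X 0 + C (b/s) * X 1] with hw
  have h1 : (aeval v).comp (aeval w) = AlgHom.id ℝ (MvPolynomial (Fin 2) ℝ) := by
    apply MvPolynomial.algHom_ext
    intro i
    fin_cases i
    · simpa [v, w, algebraMap_eq] using e1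
    · simpa [v, w, algebraMap_eq] using e2
  have h2 : (aeval w).comp (aeval v) = AlgHom.id ℝ (MvPolynomial (Fin 2) ℝ) := by
    apply MvPolynomial.algHom_ext
    intro i
    fin_cases i
    · simpa [v, w, algebraMap_eq] using e3
    · simpa [v, w, algebraMap_eq] using e4
  set e : MvPolynomial (Fin 2) ℝ ≃ₐ[ℝ] MvPolynomial (Fin 2) ℝ :=
    AlgEquiv.ofAlgHom (aeval v) (aeval w) h1 h2 with he
  have hx : Prime (X 0 : MvPolynomial (Fin 2) ℝ) := by
    rw [← MulEquiv.prime_iff (MvPolynomial.finSuccEquiv ℝ 1)]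
    simpa [MvPolynomial.finSuccEquiv_X_zero] using Polynomial.prime_X (R := MvPolynomial (Fin 1) ℝ)
  have : (C b * X 0 - C a * X 1 : MvPolynomial (Fin 2) ℝ) = e (X 0) := by
    simp [he, v]
  rw [this]
  exact (MulEquiv.prime_iff e).mpr hx

theorem tangency_poly_multiplicity
    (F : MvPolynomial (Fin 2) ℝ) (d : ℕ) (hd : 1 ≤ d)
    (hhom : F.IsHomogeneous d) (hF0 : F ≠ 0)
    (a b : ℝ) (hab : (a, b) ≠ ((0 : ℝ), (0 : ℝ)))
    (m : ℕ) (hm : 1 ≤ m)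
    (hdvd : (C b * X 0 - C a * X 1) ^ m ∣ F)
    (hndvd : ¬ (C b * X 0 - C a * X 1) ^ (m + 1) ∣ F) :
    (X 0 * pderiv 1 F - X 1 * pderiv 0 F : MvPolynomial (Fin 2) ℝ) ≠ 0 ∧
    (C b * X 0 - C a * X 1) ^ (m - 1) ∣ (X 0 * pderiv 1 F - X 1 * pderiv 0 F) ∧
    ¬ (C b * X 0 - C a * X 1) ^ m ∣ (X 0 * pderiv 1 F - X 1 * pderiv 0 F) := by
  have hab' : ¬(a = 0 ∧ b = 0) := by
    intro h; exact hab (by rw [h.1, h.2])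
  set L : MvPolynomial (Fin 2) ℝ := C b * X 0 - C a * X 1 with hL
  have hprime : Prime L := aux_prime_lin a b hab'
  have hL0 : L ≠ 0 := hprime.ne_zero
  obtain ⟨k, rfl⟩ : ∃ k, m = k + 1 := ⟨m - 1, (Nat.succ_pred_eq_of_pos hm).symm⟩
  obtain ⟨G, hG⟩ := hdvd
  have hGnd : ¬ L ∣ G := by
    rintro ⟨H, hH⟩
    exact hndvd ⟨H, by rw [hG, hH]; ring⟩
  set S : MvPolynomial (Fin 2) ℝ :=
    L * (X 0 * pderiv 1 G - X 1 * pderiv 0 G)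
      - ((k : MvPolynomial (Fin 2) ℝ) + 1) * ((C a * X 0 + C b * X 1) * G) with hS
  have hd0L : pderiv 0 L = C b := by
    simp [hL, pderiv_X_self, pderiv_X_of_ne (show (1 : Fin 2) ≠ 0 by decide), pderiv_C_mul]
  have hd1L : pderiv 1 L = -C a := by
    simp [hL, pderiv_X_self, pderiv_X_of_ne (show (0 : Fin 2) ≠ 1 by decide), pderiv_C_mul]
  have hT : X 0 * pderiv 1 F - X 1 * pderiv 0 F = L ^ k * S := by
    rw [hG]
    simp only [pderiv_mul, pderiv_pow, hd0L, hd1L, hS, Nat.add_sub_cancel]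
    push_cast
    ring
  have heval : ∀ p : MvPolynomial (Fin 2) ℝ, L ∣ p → eval ![a, b] p = 0 := by
    rintro p ⟨c, rfl⟩
    have : eval ![a, b] L = 0 := by simp [hL]; ring
    rw [map_mul, this, zero_mul]
  have hs : a ^ 2 + b ^ 2 ≠ 0 := by
    rcases not_and_or.mp hab' with h | h
    · positivity
    · positivity
  have hnd : ¬ L ^ (k + 1) ∣ (X 0 * pderiv 1 F - X 1 * pderiv 0 F) := by
    rw [hT]
    rintro ⟨Q, hQ⟩
    have hdS : L ∣ S := by
      refine ⟨Q, mul_left_cancel₀ (pow_ne_zero k hL0) ?_⟩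
      rw [hQ]; ring
    have hdvd2 : L ∣ ((k : MvPolynomial (Fin 2) ℝ) + 1) * ((C a * X 0 + C b * X 1) * G) := by
      have hrw : ((k : MvPolynomial (Fin 2) ℝ) + 1) * ((C a * X 0 + C b * X 1) * G)
          = L * (X 0 * pderiv 1 G - X 1 * pderiv 0 G) - S := by
        rw [hS]; ring
      rw [hrw]
      exact dvd_sub (Dvd.intro _ rfl) hdS
    rcases hprime.dvd_mul.mp hdvd2 with h | h
    · have := heval _ h
      simp at this
      exact_mod_cast Nat.succ_ne_zero k (by exact_mod_cast this)
    rcases hprime.dvd_mul.mp h with h2 | h2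
    · have := heval _ h2
      simp at this
      exact hs (by linarith [this])
    · exact hGnd h2
  refine ⟨fun h0 => hnd (h0 ▸ dvd_zero _), ⟨S, by rw [Nat.add_sub_cancel, hT]⟩, hnd⟩
end

section
/- Fix an integer k ≥ 1 and let f(x,y) = (y(x²+1) − 1)·(y(x²+2) − 1)·…·(y(x²+k) − 1). Then f has exactly k − 1 critical points, and every critical point of f is a local extremum (a local maximum or a local minimum); f has no other real critical points. In particular, for k = 1 the polynomial f has no critical points. -/
/-- `p` is a critical point of `f : ℝ² → ℝ`: both partial derivatives vanish at `p`. -/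
def IsCritPt (f : ℝ × ℝ → ℝ) (p : ℝ × ℝ) : Prop :=
  deriv (fun x => f (x, p.2)) p.1 = 0 ∧ deriv (fun y => f (p.1, y)) p.2 = 0

namespace KCritAux

open Finset Polynomial Set

/-! ### Basic definitions -/

noncomputable def Gp (k : ℕ) : Polynomial ℝ :=
  ∏ j ∈ Finset.Icc 1 k, (Polynomial.C (j:ℝ) * Polynomial.X - 1)

noncomputable def Pp (k : ℕ) : Polynomial ℝ := (Gp k).derivative

def gk (k : ℕ) : ℝ → ℝ := fun y => ∏ j ∈ Finset.Icc 1 k, (y * (j:ℝ) - 1)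

def Zset (k : ℕ) : Set ℝ := {y : ℝ | (Pp k).eval y = 0}

noncomputable def phi2 (k : ℕ) : ℝ × ℝ → ℝ :=
  fun q => (∑ j ∈ Finset.Icc 1 k, ∏ i ∈ (Finset.Icc 1 k).erase j, (q.2 * (q.1 + (i:ℝ)) - 1)) * q.2

/-! ### Derivative computations -/

lemma hderiv_y (k : ℕ) (u y : ℝ) :
    HasDerivAt (fun t : ℝ => ∏ j ∈ Finset.Icc 1 k, (t * (u + (j:ℝ)) - 1))
      (∑ j ∈ Finset.Icc 1 k, (∏ i ∈ (Finset.Icc 1 k).erase j, (y * (u + (i:ℝ)) - 1)) * (u + (j:ℝ))) y := by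
  have h := HasDerivAt.fun_finsetProd (u := Finset.Icc 1 k)
    (f := fun j (t:ℝ) => t * (u + (j:ℝ)) - 1) (f' := fun j => u + (j:ℝ)) (x := y)
    (fun i _ => by simpa using ((hasDerivAt_id y).mul_const (u + (i:ℝ))).sub_const 1)
  simpa [smul_eq_mul] using h

lemma hderiv_x (k : ℕ) (b x : ℝ) :
    HasDerivAt (fun t : ℝ => ∏ j ∈ Finset.Icc 1 k, (b * (t^2 + (j:ℝ)) - 1))
      (∑ j ∈ Finset.Icc 1 k, (∏ i ∈ (Finset.Icc 1 k).erase j, (b * (x^2 + (i:ℝ)) - 1)) * (b * (2*x))) x := by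
  have h := HasDerivAt.fun_finsetProd (u := Finset.Icc 1 k)
    (f := fun j (t:ℝ) => b * (t^2 + (j:ℝ)) - 1) (f' := fun j => b * (2*x)) (x := x)
    (fun i _ => ?_)
  · simpa [smul_eq_mul] using h
  · have h1 : HasDerivAt (fun t:ℝ => t^2) (2*x) x := by
      simpa using hasDerivAt_pow 2 x
    exact (((h1.add_const (i:ℝ))).const_mul b).sub_const 1

lemma hderiv_u (k : ℕ) (y u : ℝ) :
    HasDerivAt (fun s : ℝ => ∏ j ∈ Finset.Icc 1 k, (y * (s + (j:ℝ)) - 1))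
      (∑ j ∈ Finset.Icc 1 k, (∏ i ∈ (Finset.Icc 1 k).erase j, (y * (u + (i:ℝ)) - 1)) * y) u := by
  have h := HasDerivAt.fun_finsetProd (u := Finset.Icc 1 k)
    (f := fun j (s:ℝ) => y * (s + (j:ℝ)) - 1) (f' := fun j => y) (x := u)
    (fun i _ => by simpa using (((hasDerivAt_id u).add_const (i:ℝ)).const_mul y).sub_const 1)
  simpa [smul_eq_mul] using h

/-! ### The key algebraic identity -/

lemma key_ident (k : ℕ) (u y : ℝ) :
    y * (∑ j ∈ Finset.Icc 1 k, (∏ i ∈ (Finset.Icc 1 k).erase j, (y * (u + (i:ℝ)) - 1)) * (u + (j:ℝ)))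
      = (k:ℝ) * (∏ j ∈ Finset.Icc 1 k, (y * (u + (j:ℝ)) - 1))
        + ∑ j ∈ Finset.Icc 1 k, (∏ i ∈ (Finset.Icc 1 k).erase j, (y * (u + (i:ℝ)) - 1)) := by
  rw [Finset.mul_sum]
  have : ∀ j ∈ Finset.Icc 1 k,
      y * ((∏ i ∈ (Finset.Icc 1 k).erase j, (y * (u + (i:ℝ)) - 1)) * (u + (j:ℝ)))
      = (∏ i ∈ Finset.Icc 1 k, (y * (u + (i:ℝ)) - 1))
        + (∏ i ∈ (Finset.Icc 1 k).erase j, (y * (u + (i:ℝ)) - 1)) := by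
    intro j hj
    have h1 : (y * (u + (j:ℝ)) - 1) * (∏ i ∈ (Finset.Icc 1 k).erase j, (y * (u + (i:ℝ)) - 1))
        = ∏ i ∈ Finset.Icc 1 k, (y * (u + (i:ℝ)) - 1) :=
      Finset.mul_prod_erase _ (fun i : ℕ => y * (u + (i:ℝ)) - 1) hj
    ring_nf
    ring_nf at h1; linear_combination h1
  rw [Finset.sum_congr rfl this, Finset.sum_add_distrib, Finset.sum_const, Nat.card_Icc]
  simp [nsmul_eq_mul]

/-! ### Polynomial facts -/

lemma eval_Gp (k : ℕ) (y : ℝ) : (Gp k).eval y = gk k y := by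
  simp [Gp, gk, Polynomial.eval_prod, mul_comm]

lemma natDegree_Gp (k : ℕ) : (Gp k).natDegree = k := by
  rw [Gp, Polynomial.natDegree_prod]
  · have : ∀ j ∈ Finset.Icc 1 k, (Polynomial.C (j:ℝ) * Polynomial.X - 1).natDegree = 1 := by
      intro j hj
      have hj1 : (j:ℝ) ≠ 0 := by
        have := (Finset.mem_Icc.1 hj).1; positivity
      have : (Polynomial.C (j:ℝ) * Polynomial.X - 1 : Polynomial ℝ)
          = Polynomial.C (j:ℝ) * Polynomial.X + Polynomial.C (-1) := by
        simp [sub_eq_add_neg]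
      rw [this, Polynomial.natDegree_linear hj1]
    rw [Finset.sum_congr rfl this, Finset.sum_const, Nat.card_Icc]
    simp
  · intro j hj h
    have := congrArg (Polynomial.eval (0:ℝ)) h
    simp at this

lemma Pp_ne_zero (k : ℕ) (hk : 1 ≤ k) : Pp k ≠ 0 := by
  intro h
  have h2 : (Gp k).natDegree = 0 := Polynomial.natDegree_eq_zero_of_derivative_eq_zero h
  rw [natDegree_Gp] at h2; omega

lemma natDegree_Pp (k : ℕ) (hk : 1 ≤ k) : (Pp k).natDegree ≤ k - 1 := by
  have : (Pp k).natDegree < (Gp k).natDegree := by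
    apply Polynomial.natDegree_derivative_lt
    rw [natDegree_Gp]; omega
  rw [natDegree_Gp] at this; omega

lemma deriv_gk (k : ℕ) (y : ℝ) : deriv (gk k) y = (Pp k).eval y := by
  have : gk k = fun y => (Gp k).eval y := by funext y; rw [eval_Gp]
  rw [this, Polynomial.deriv]; rfl

lemma gk_differentiable (k : ℕ) : Differentiable ℝ (gk k) := by
  have : gk k = fun y => (Gp k).eval y := by funext y; rw [eval_Gp]
  rw [this]; exact (Gp k).differentiable

lemma hasDerivAt_gk (k : ℕ) (y : ℝ) :
    HasDerivAt (gk k)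
      (∑ j ∈ Finset.Icc 1 k, (∏ i ∈ (Finset.Icc 1 k).erase j, (y * (i:ℝ) - 1)) * (j:ℝ)) y := by
  have := hderiv_y k 0 y
  simp only [zero_add] at this
  exact this

lemma eval_Pp_eq (k : ℕ) (y : ℝ) :
    (Pp k).eval y = ∑ j ∈ Finset.Icc 1 k, (∏ i ∈ (Finset.Icc 1 k).erase j, (y * (i:ℝ) - 1)) * (j:ℝ) := by
  rw [← deriv_gk, (hasDerivAt_gk k y).deriv]

/-! ### Roots of `gk` and Rolle points -/

lemma gk_root (k : ℕ) {j : ℕ} (hj : j ∈ Finset.Icc 1 k) : gk k (1/(j:ℝ)) = 0 := by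
  apply Finset.prod_eq_zero hj
  have hj1 : (j:ℝ) ≠ 0 := by
    have := (Finset.mem_Icc.1 hj).1
    positivity
  field_simp
  norm_num

lemma rolle_root (k : ℕ) (hk : 1 ≤ k) {m : ℕ} (hm1 : 1 ≤ m) (hm2 : m ≤ k - 1) :
    ∃ c ∈ Set.Ioo (1/((m:ℝ)+1)) (1/(m:ℝ)), (Pp k).eval c = 0 := by
  have hmpos : (0:ℝ) < (m:ℝ) := by exact_mod_cast hm1
  have hlt : 1/((m:ℝ)+1) < 1/(m:ℝ) := by
    apply one_div_lt_one_div_of_lt hmpos; linarith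
  have hv : gk k (1/((m:ℝ)+1)) = gk k (1/(m:ℝ)) := by
    have h1 : gk k (1/((m:ℝ)+1)) = 0 := by
      have : ((m:ℝ)+1) = ((m+1 : ℕ) : ℝ) := by push_cast; ring
      rw [this]
      exact gk_root k (Finset.mem_Icc.2 ⟨by omega, by omega⟩)
    have h2 : gk k (1/(m:ℝ)) = 0 := gk_root k (Finset.mem_Icc.2 ⟨by omega, by omega⟩)
    rw [h1, h2]
  obtain ⟨c, hc, hc0⟩ := exists_deriv_eq_zero hlt (gk_differentiable k).continuous.continuousOn hv
  exact ⟨c, hc, by rw [← deriv_gk]; exact hc0⟩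

/-! ### Counting the roots of `Pp` -/

lemma main_count (k : ℕ) (hk : 1 ≤ k) :
    (Zset k).Finite ∧ (Zset k).ncard = k - 1 ∧
    ∀ c ∈ Zset k, ∃ lo hi : ℝ, 0 < lo ∧ lo < c ∧ c < hi ∧
      gk k lo = 0 ∧ gk k hi = 0 ∧ gk k c ≠ 0 ∧
      ∀ z ∈ Set.Ioo lo hi, z ∈ Zset k → z = c := by
  classical
  have hcf : ∀ m : ℕ, ∃ c : ℝ, 1 ≤ m → m ≤ k - 1 →
      c ∈ Set.Ioo (1/((m:ℝ)+1)) (1/(m:ℝ)) ∧ (Pp k).eval c = 0 := by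
    intro m
    by_cases h : 1 ≤ m ∧ m ≤ k - 1
    · obtain ⟨c, hc, hc0⟩ := rolle_root k hk h.1 h.2
      exact ⟨c, fun _ _ => ⟨hc, hc0⟩⟩
    · exact ⟨0, fun h1 h2 => absurd ⟨h1, h2⟩ h⟩
  choose cf hcf using hcf
  have cf_mem : ∀ m ∈ Finset.Icc 1 (k-1), cf m ∈ Set.Ioo (1/((m:ℝ)+1)) (1/(m:ℝ)) := by
    intro m hm
    have := Finset.mem_Icc.1 hm
    exact (hcf m this.1 this.2).1
  have cf_root : ∀ m ∈ Finset.Icc 1 (k-1), (Pp k).eval (cf m) = 0 := by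
    intro m hm
    have := Finset.mem_Icc.1 hm
    exact (hcf m this.1 this.2).2
  have gap_lt : ∀ m ∈ Finset.Icc 1 (k-1), ∀ m' ∈ Finset.Icc 1 (k-1), m < m' → cf m' < cf m := by
    intro m hm m' hm' hlt
    have h1 := cf_mem m hm
    have h2 := cf_mem m' hm'
    have hm1 : (1:ℕ) ≤ m := (Finset.mem_Icc.1 hm).1
    have hmpos : (0:ℝ) < (m:ℝ) := by exact_mod_cast hm1
    have : 1/(m':ℝ) ≤ 1/((m:ℝ)+1) := by
      apply one_div_le_one_div_of_le (by linarith)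
      have : (m:ℝ) + 1 ≤ (m':ℝ) := by exact_mod_cast hlt
      linarith
    calc cf m' < 1/(m':ℝ) := h2.2
      _ ≤ 1/((m:ℝ)+1) := this
      _ < cf m := h1.1
  have cf_injOn : Set.InjOn cf (Finset.Icc 1 (k-1)) := by
    intro m hm m' hm' heq
    by_contra hne
    rcases lt_or_gt_of_ne hne with h | h
    · have := gap_lt m (by simpa using hm) m' (by simpa using hm') h
      rw [heq] at this; exact absurd this (lt_irrefl _)
    · have := gap_lt m' (by simpa using hm') m (by simpa using hm) h
      rw [heq] at this; exact absurd this (lt_irrefl _)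
  set T := (Pp k).roots.toFinset with hT
  set M := (Finset.Icc 1 (k-1)).image cf with hM
  have hZT : Zset k = ↑T := by
    ext y
    simp only [Zset, Set.mem_setOf_eq, hT, Multiset.mem_toFinset, Finset.coe_sort_coe,
      Polynomial.mem_roots', Finset.mem_coe]
    constructor
    · intro h; exact ⟨Pp_ne_zero k hk, h⟩
    · intro h; exact h.2
  have hMT : M ⊆ T := by
    intro y hy
    rw [hM] at hy
    obtain ⟨m, hm, rfl⟩ := Finset.mem_image.1 hy
    simp only [hT, Multiset.mem_toFinset, Polynomial.mem_roots']
    exact ⟨Pp_ne_zero k hk, cf_root m hm⟩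
  have hMcard : M.card = k - 1 := by
    rw [hM, Finset.card_image_of_injOn cf_injOn, Nat.card_Icc]
    omega
  have hTcard : T.card ≤ k - 1 := by
    calc T.card ≤ Multiset.card (Pp k).roots := Multiset.toFinset_card_le _
      _ ≤ (Pp k).natDegree := Polynomial.card_roots' _
      _ ≤ k - 1 := natDegree_Pp k hk
  have hMeqT : M = T := Finset.eq_of_subset_of_card_le hMT (by omega)
  have hfin : (Zset k).Finite := by rw [hZT]; exact T.finite_toSet
  have hncard : (Zset k).ncard = k - 1 := by
    rw [hZT, Set.ncard_coe_finset, ← hMeqT, hMcard]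
  refine ⟨hfin, hncard, ?_⟩
  intro c hc
  have hcT : c ∈ M := by
    rw [hMeqT]
    rw [hZT] at hc
    exact_mod_cast hc
  obtain ⟨m, hm, hcm⟩ := Finset.mem_image.1 hcT
  have hmIcc := Finset.mem_Icc.1 hm
  have hmem := cf_mem m hm
  subst hcm
  clear hc hcT
  refine ⟨1/((m:ℝ)+1), 1/(m:ℝ), by positivity, hmem.1, hmem.2, ?_, ?_, ?_, ?_⟩
  · have : ((m:ℝ)+1) = ((m+1 : ℕ) : ℝ) := by push_cast; ring
    rw [this]
    exact gk_root k (Finset.mem_Icc.2 ⟨by omega, by omega⟩)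
  · exact gk_root k (Finset.mem_Icc.2 ⟨by omega, by omega⟩)
  · rw [gk]
    rw [Finset.prod_ne_zero_iff]
    intro j hj
    have hjIcc := Finset.mem_Icc.1 hj
    have hjpos : (0:ℝ) < (j:ℝ) := by exact_mod_cast hjIcc.1
    have hcpos : 0 < cf m := lt_trans (by positivity) hmem.1
    intro heq
    have heq' : cf m * (j:ℝ) = 1 := by linarith
    rcases le_or_gt j m with h | h
    · have hjm : (j:ℝ) ≤ (m:ℝ) := by exact_mod_cast h
      have hmpos : (0:ℝ) < (m:ℝ) := by exact_mod_cast hmIcc.1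
      have : cf m * (j:ℝ) < 1 := by
        have h2 : cf m < 1/(m:ℝ) := hmem.2
        have : cf m * (j:ℝ) ≤ cf m * (m:ℝ) := by nlinarith
        have h3 : cf m * (m:ℝ) < 1 := by
          have h4 : (1/(m:ℝ)) * (m:ℝ) = 1 := by field_simp
          nlinarith
        linarith
      linarith
    · have hjm : (m:ℝ) + 1 ≤ (j:ℝ) := by exact_mod_cast h
      have : 1 < cf m * (j:ℝ) := by
        have h2 : 1/((m:ℝ)+1) < cf m := hmem.1
        have h3 : 1 < cf m * ((m:ℝ)+1) := by
          have hm1pos : (0:ℝ) < (m:ℝ)+1 := by positivity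
          calc 1 = (1/((m:ℝ)+1)) * ((m:ℝ)+1) := by field_simp
            _ < cf m * ((m:ℝ)+1) := by nlinarith
        nlinarith
      linarith
  · intro z hz hzZ
    have hzT : z ∈ M := by
      rw [hMeqT]
      rw [hZT] at hzZ
      exact_mod_cast hzZ
    obtain ⟨m', hm', hzm⟩ := Finset.mem_image.1 hzT
    subst hzm
    by_contra hne
    have hne' : m' ≠ m := by
      intro h; subst h; exact hne rfl
    rcases lt_or_gt_of_ne hne' with h | h
    · have h1 := cf_mem m' hm'
      have : 1/(m:ℝ) ≤ 1/((m':ℝ)+1) := by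
        apply one_div_le_one_div_of_le
        · have : (1:ℕ) ≤ m' := (Finset.mem_Icc.1 hm').1
          have : (0:ℝ) < (m':ℝ) := by exact_mod_cast this
          linarith
        · have : m' + 1 ≤ m := by omega
          exact_mod_cast this
      have : 1/(m:ℝ) < cf m' := lt_of_le_of_lt this h1.1
      exact absurd hz.2 (not_lt.2 this.le)
    · have h1 := cf_mem m' hm'
      have : 1/(m':ℝ) ≤ 1/((m:ℝ)+1) := by
        apply one_div_le_one_div_of_le
        · have : (1:ℕ) ≤ m := hmIcc.1
          have : (0:ℝ) < (m:ℝ) := by exact_mod_cast this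
          linarith
        · have : m + 1 ≤ m' := by omega
          exact_mod_cast this
      have : cf m' < 1/((m:ℝ)+1) := lt_of_lt_of_le h1.2 this
      exact absurd hz.1 (not_lt.2 this.le)

/-! ### 1D unimodality lemmas -/

lemma ivt_deriv {ψ : ℝ → ℝ} (hψ : Continuous ψ) {z w : ℝ} (hz : ψ z < 0) (hw : 0 < ψ w) :
    ∃ ζ, ((min z w < ζ ∧ ζ < max z w) ∧ ψ ζ = 0) := by
  rcases lt_trichotomy z w with h | h | h
  · have := intermediate_value_Ioo (le_of_lt h) hψ.continuousOn (a := z) (b := w)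
    have h0 : (0:ℝ) ∈ Set.Ioo (ψ z) (ψ w) := ⟨hz, hw⟩
    obtain ⟨ζ, hζ, hζ0⟩ := this h0
    exact ⟨ζ, ⟨by rw [min_eq_left h.le]; exact hζ.1, by rw [max_eq_right h.le]; exact hζ.2⟩, hζ0⟩
  · subst h; linarith
  · have := intermediate_value_Ioo' (le_of_lt h) hψ.continuousOn (a := w) (b := z)
    have h0 : (0:ℝ) ∈ Set.Ioo (ψ z) (ψ w) := ⟨hz, hw⟩
    obtain ⟨ζ, hζ, hζ0⟩ := this h0
    exact ⟨ζ, ⟨by rw [min_eq_right h.le]; exact hζ.1, by rw [max_eq_left h.le]; exact hζ.2⟩, hζ0⟩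

lemma local_max_1d {φ : ℝ → ℝ} (hφ : Differentiable ℝ φ) (hcd : Continuous (deriv φ))
    {lo c hi : ℝ} (h1 : lo < c) (h2 : c < hi) (hlo : φ lo = 0) (hhi : φ hi = 0)
    (hpos : 0 < φ c) (huniq : ∀ z, z ∈ Set.Ioo lo hi → deriv φ z = 0 → z = c) :
    ∀ y ∈ Set.Ioo lo hi, φ y ≤ φ c := by
  have hA : ∀ z ∈ Set.Ioo lo c, 0 ≤ deriv φ z := by
    intro z hz
    by_contra hneg
    push_neg at hneg
    obtain ⟨w, hw, hwslope⟩ := exists_deriv_eq_slope φ h1 hφ.continuous.continuousOn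
      hφ.differentiableOn
    have hwpos : 0 < deriv φ w := by
      rw [hwslope, hlo]
      apply div_pos <;> linarith
    obtain ⟨ζ, ⟨hζ1, hζ2⟩, hζ0⟩ := ivt_deriv hcd hneg hwpos
    have hζmem : ζ ∈ Set.Ioo lo hi := by
      constructor
      · exact lt_of_le_of_lt (le_min hz.1.le hw.1.le) hζ1
      · exact lt_trans (lt_of_lt_of_le hζ2 (max_le hz.2.le hw.2.le)) h2
    have hlt : ζ < c := lt_of_lt_of_le hζ2 (max_le hz.2.le hw.2.le)
    exact absurd (huniq ζ hζmem hζ0) (ne_of_lt hlt)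
  have hB : ∀ z ∈ Set.Ioo c hi, deriv φ z ≤ 0 := by
    intro z hz
    by_contra hneg
    push_neg at hneg
    obtain ⟨w, hw, hwslope⟩ := exists_deriv_eq_slope φ h2 hφ.continuous.continuousOn
      hφ.differentiableOn
    have hwneg : deriv φ w < 0 := by
      rw [hwslope, hhi]
      apply div_neg_of_neg_of_pos <;> linarith
    obtain ⟨ζ, ⟨hζ1, hζ2⟩, hζ0⟩ := ivt_deriv hcd hwneg hneg
    have hζmem : ζ ∈ Set.Ioo lo hi := by
      constructor
      · exact lt_trans h1 (lt_of_le_of_lt (le_min hw.1.le hz.1.le) hζ1)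
      · exact lt_of_lt_of_le hζ2 (max_le hw.2.le hz.2.le)
    have hlt : c < ζ := lt_of_le_of_lt (le_min hw.1.le hz.1.le) hζ1
    exact absurd (huniq ζ hζmem hζ0) (ne_of_gt hlt)
  intro y hy
  rcases lt_trichotomy y c with h | h | h
  · have hmono : MonotoneOn φ (Set.Icc y c) := by
      apply monotoneOn_of_deriv_nonneg (convex_Icc y c) hφ.continuous.continuousOn
        hφ.differentiableOn
      intro z hz
      rw [interior_Icc] at hz
      exact hA z ⟨lt_trans hy.1 hz.1, hz.2⟩
    exact hmono ⟨le_refl y, h.le⟩ ⟨h.le, le_refl c⟩ h.le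
  · rw [h]
  · have hmono : AntitoneOn φ (Set.Icc c y) := by
      apply antitoneOn_of_deriv_nonpos (convex_Icc c y) hφ.continuous.continuousOn
        hφ.differentiableOn
      intro z hz
      rw [interior_Icc] at hz
      exact hB z ⟨hz.1, lt_trans hz.2 hy.2⟩
    exact hmono ⟨le_refl c, h.le⟩ ⟨h.le, le_refl y⟩ h.le

lemma local_min_1d {φ : ℝ → ℝ} (hφ : Differentiable ℝ φ) (hcd : Continuous (deriv φ))
    {lo c hi : ℝ} (h1 : lo < c) (h2 : c < hi) (hlo : φ lo = 0) (hhi : φ hi = 0)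
    (hneg : φ c < 0) (huniq : ∀ z, z ∈ Set.Ioo lo hi → deriv φ z = 0 → z = c) :
    ∀ y ∈ Set.Ioo lo hi, φ c ≤ φ y := by
  have hd : ∀ x, deriv (fun t => -φ t) x = - deriv φ x := fun x => deriv.fun_neg
  have := local_max_1d (φ := fun t => -φ t) hφ.neg
    (by simp only [funext hd]; exact hcd.neg) h1 h2 (by simp [hlo]) (by simp [hhi])
    (by simpa using hneg)
    (fun z hz h0 => huniq z hz (by rw [hd] at h0; linarith))
  intro y hy
  have := this y hy
  linarith

/-! ### 2D ingredients -/

lemma phi2_continuous (k : ℕ) : Continuous (phi2 k) := by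
  unfold phi2
  fun_prop

lemma hderiv_u' (k : ℕ) (y u : ℝ) :
    HasDerivAt (fun s : ℝ => ∏ j ∈ Finset.Icc 1 k, (y * (s + (j:ℝ)) - 1)) (phi2 k (u, y)) u := by
  have := hderiv_u k y u
  rwa [← Finset.sum_mul] at this

lemma Hanti (k : ℕ) (y d : ℝ) (hd : 0 ≤ d)
    (hsign : ∀ u ∈ Set.Icc (0:ℝ) d, phi2 k (u, y) ≤ 0) :
    (∏ j ∈ Finset.Icc 1 k, (y * (d + (j:ℝ)) - 1)) ≤ ∏ j ∈ Finset.Icc 1 k, (y * (0 + (j:ℝ)) - 1) := by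
  have hdiff : Differentiable ℝ (fun s : ℝ => ∏ j ∈ Finset.Icc 1 k, (y * (s + (j:ℝ)) - 1)) :=
    fun u => (hderiv_u' k y u).differentiableAt
  have h := antitoneOn_of_deriv_nonpos (convex_Icc (0:ℝ) d) hdiff.continuous.continuousOn
    hdiff.differentiableOn ?_
  · exact h (Set.left_mem_Icc.2 hd) (Set.right_mem_Icc.2 hd) hd
  · intro u hu
    rw [interior_Icc] at hu
    rw [(hderiv_u' k y u).deriv]
    exact hsign u (Set.mem_Icc_of_Ioo hu)

lemma Hmono (k : ℕ) (y d : ℝ) (hd : 0 ≤ d)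
    (hsign : ∀ u ∈ Set.Icc (0:ℝ) d, 0 ≤ phi2 k (u, y)) :
    (∏ j ∈ Finset.Icc 1 k, (y * (0 + (j:ℝ)) - 1)) ≤ ∏ j ∈ Finset.Icc 1 k, (y * (d + (j:ℝ)) - 1) := by
  have hdiff : Differentiable ℝ (fun s : ℝ => ∏ j ∈ Finset.Icc 1 k, (y * (s + (j:ℝ)) - 1)) :=
    fun u => (hderiv_u' k y u).differentiableAt
  have h := monotoneOn_of_deriv_nonneg (convex_Icc (0:ℝ) d) hdiff.continuous.continuousOn
    hdiff.differentiableOn ?_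
  · exact h (Set.left_mem_Icc.2 hd) (Set.right_mem_Icc.2 hd) hd
  · intro u hu
    rw [interior_Icc] at hu
    rw [(hderiv_u' k y u).deriv]
    exact hsign u (Set.mem_Icc_of_Ioo hu)

lemma phi2_val (k : ℕ) (c : ℝ) (hc : (Pp k).eval c = 0) :
    phi2 k (0, c) = -((k:ℝ) * gk k c) * c := by
  have h := key_ident k 0 c
  simp only [zero_add] at h
  rw [eval_Pp_eq k c] at hc
  rw [hc, mul_zero] at h
  have hS : (∑ j ∈ Finset.Icc 1 k, ∏ i ∈ (Finset.Icc 1 k).erase j, (c * (i:ℝ) - 1))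
      = -((k:ℝ) * gk k c) := by
    rw [gk]; linarith [h]
  unfold phi2
  simp only [zero_add]
  rw [hS]

/-! ### Characterization of critical points -/

lemma crit_iff (k : ℕ) (hk : 1 ≤ k) (f : ℝ × ℝ → ℝ)
    (hf : ∀ p : ℝ × ℝ, f p = ∏ j ∈ Finset.Icc 1 k, (p.2 * (p.1 ^ 2 + (j : ℝ)) - 1))
    (a b : ℝ) : IsCritPt f (a, b) ↔ a = 0 ∧ (Pp k).eval b = 0 := by
  have hfx : (fun x => f (x, b)) = fun x => ∏ j ∈ Finset.Icc 1 k, (b * (x^2 + (j:ℝ)) - 1) :=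
    funext fun x => hf (x, b)
  have hfy : (fun y => f (a, y)) = fun y => ∏ j ∈ Finset.Icc 1 k, (y * (a^2 + (j:ℝ)) - 1) :=
    funext fun y => hf (a, y)
  constructor
  · rintro ⟨hx, hy⟩
    simp only [IsCritPt] at hx hy
    rw [hfx, (hderiv_x k b a).deriv] at hx
    rw [hfy, (hderiv_y k (a^2) b).deriv] at hy
    have hb : b ≠ 0 := by
      rintro rfl
      have hterm : ∀ j ∈ Finset.Icc 1 k,
          (∏ i ∈ (Finset.Icc 1 k).erase j, ((0:ℝ) * (a^2 + (i:ℝ)) - 1)) * (a^2 + (j:ℝ))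
          = (-1:ℝ)^(k-1) * (a^2 + (j:ℝ)) := by
        intro j hj
        rw [Finset.prod_congr rfl (fun i _ => by ring_nf : ∀ i ∈ (Finset.Icc 1 k).erase j,
          ((0:ℝ) * (a^2 + (i:ℝ)) - 1) = -1), Finset.prod_const,
          Finset.card_erase_of_mem hj, Nat.card_Icc]
        norm_num
      rw [Finset.sum_congr rfl hterm, ← Finset.mul_sum] at hy
      have hsum : 0 < ∑ j ∈ Finset.Icc 1 k, (a^2 + (j:ℝ)) := by
        apply Finset.sum_pos
        · intro j hj
          have h1 : 1 ≤ j := (Finset.mem_Icc.1 hj).1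
          have : (1:ℝ) ≤ (j:ℝ) := by exact_mod_cast h1
          positivity
        · exact ⟨1, Finset.mem_Icc.2 ⟨le_refl 1, hk⟩⟩
      have h1 : ((-1:ℝ))^(k-1) ≠ 0 := pow_ne_zero _ (by norm_num)
      exact absurd hy (mul_ne_zero h1 (ne_of_gt hsum))
    by_cases ha : a = 0
    · subst ha
      refine ⟨rfl, ?_⟩
      rw [eval_Pp_eq]
      simp only [ne_eq, OfNat.ofNat_ne_zero, not_false_eq_true, zero_pow, zero_add] at hy
      exact hy
    · exfalso
      have hS : (∑ j ∈ Finset.Icc 1 k, ∏ i ∈ (Finset.Icc 1 k).erase j, (b * (a^2 + (i:ℝ)) - 1)) = 0 := by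
        rw [← Finset.sum_mul] at hx
        have h2 : b * (2*a) ≠ 0 := by
          apply mul_ne_zero hb; simpa using ha
        exact (mul_eq_zero.1 hx).resolve_right h2
      have hki := key_ident k (a^2) b
      rw [hy, hS, mul_zero, add_zero] at hki
      have hk0 : (k:ℝ) ≠ 0 := by
        have : 0 < k := hk; positivity
      have hprod : (∏ j ∈ Finset.Icc 1 k, (b * (a^2 + (j:ℝ)) - 1)) = 0 := by
        rcases mul_eq_zero.1 hki.symm with h | h
        · exact absurd h hk0
        · exact h
      obtain ⟨m, hm, hm0⟩ := Finset.prod_eq_zero_iff.1 hprod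
      have hSm : (∑ j ∈ Finset.Icc 1 k, ∏ i ∈ (Finset.Icc 1 k).erase j, (b * (a^2 + (i:ℝ)) - 1))
          = ∏ i ∈ (Finset.Icc 1 k).erase m, (b * (a^2 + (i:ℝ)) - 1) := by
        apply Finset.sum_eq_single_of_mem m hm
        intro j hj hjm
        apply Finset.prod_eq_zero (i := m) (Finset.mem_erase.2 ⟨fun h => hjm h.symm, hm⟩) hm0
      rw [hSm] at hS
      have : ∀ i ∈ (Finset.Icc 1 k).erase m, (b * (a^2 + (i:ℝ)) - 1) ≠ 0 := by
        intro i hi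
        have him : i ≠ m := (Finset.mem_erase.1 hi).1
        have h1 : (1:ℝ) = b * (a^2 + (m:ℝ)) := by linarith [hm0]
        have : b * (a^2 + (i:ℝ)) - 1 = b * ((i:ℝ) - (m:ℝ)) := by rw [h1]; ring
        rw [this]
        apply mul_ne_zero hb
        intro h
        apply him
        have : (i:ℝ) = (m:ℝ) := by linarith
        exact_mod_cast this
      exact Finset.prod_ne_zero_iff.2 this hS
  · rintro ⟨rfl, hb⟩
    constructor
    · show deriv (fun x => f (x, b)) 0 = 0
      rw [hfx, (hderiv_x k b 0).deriv]
      simp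
    · show deriv (fun y => f (0, y)) b = 0
      rw [hfy, (hderiv_y k ((0:ℝ)^2) b).deriv]
      rw [eval_Pp_eq] at hb
      simpa using hb

/-! ### Critical points are local extrema -/

lemma extremum (k : ℕ) (hk : 1 ≤ k) (f : ℝ × ℝ → ℝ)
    (hf : ∀ p : ℝ × ℝ, f p = ∏ j ∈ Finset.Icc 1 k, (p.2 * (p.1 ^ 2 + (j : ℝ)) - 1))
    (c lo hi : ℝ) (hlo0 : 0 < lo) (h1 : lo < c) (h2 : c < hi)
    (hglo : gk k lo = 0) (hghi : gk k hi = 0) (hgc : gk k c ≠ 0)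
    (hc : (Pp k).eval c = 0)
    (huniq : ∀ z ∈ Set.Ioo lo hi, z ∈ Zset k → z = c) :
    IsLocalMax f (0, c) ∨ IsLocalMin f (0, c) := by
  have hcpos : 0 < c := lt_trans hlo0 h1
  have hkpos : (0:ℝ) < (k:ℝ) := by exact_mod_cast hk
  have hgkdiff := gk_differentiable k
  have hgkderivcont : Continuous (deriv (gk k)) := by
    have : deriv (gk k) = fun y => (Pp k).eval y := funext (deriv_gk k)
    rw [this]
    exact (Pp k).continuous
  have huniq' : ∀ z, z ∈ Set.Ioo lo hi → deriv (gk k) z = 0 → z = c := by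
    intro z hz h0
    apply huniq z hz
    show (Pp k).eval z = 0
    rw [← deriv_gk]; exact h0
  have hf0 : ∀ y : ℝ, f (0, y) = gk k y := by
    intro y
    rw [hf (0, y)]
    simp [gk]
  rcases hgc.lt_or_gt with hneg | hpos
  · -- local minimum case
    right
    have hy1 := local_min_1d hgkdiff hgkderivcont h1 h2 hglo hghi hneg huniq'
    have hval : 0 < phi2 k (0, c) := by
      rw [phi2_val k c hc]
      nlinarith [mul_pos (mul_pos hkpos (neg_pos.2 hneg)) hcpos]
    have hopen : IsOpen {q : ℝ × ℝ | 0 < phi2 k q} :=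
      isOpen_lt continuous_const (phi2_continuous k)
    obtain ⟨ε, hε, hball⟩ := Metric.isOpen_iff.1 hopen (0, c) hval
    set r := min (Real.sqrt ε) (min ε (min (c - lo) (hi - c))) with hr
    have hrpos : 0 < r :=
      lt_min (Real.sqrt_pos.2 hε) (lt_min hε (lt_min (by linarith) (by linarith)))
    apply Filter.eventually_of_mem (Metric.ball_mem_nhds _ hrpos)
    intro q hq
    rw [Metric.mem_ball, Prod.dist_eq, max_lt_iff] at hq
    obtain ⟨hq1, hq2⟩ := hq
    have hq1' : |q.1| < Real.sqrt ε := by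
      rw [Real.dist_eq, sub_zero] at hq1
      exact lt_of_lt_of_le hq1 (min_le_left _ _)
    have hq2' : |q.2 - c| < min ε (min (c - lo) (hi - c)) := by
      rw [Real.dist_eq] at hq2
      exact lt_of_lt_of_le hq2 (min_le_right _ _)
    have hx2 : q.1 ^ 2 < ε := by
      have h := pow_lt_pow_left₀ hq1' (abs_nonneg q.1) (n := 2) (by norm_num)
      rw [sq_abs, Real.sq_sqrt hε.le] at h
      exact h
    have hy2ε : |q.2 - c| < ε := lt_of_lt_of_le hq2' (min_le_left _ _)
    have hyio : q.2 ∈ Set.Ioo lo hi := by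
      have h := lt_of_lt_of_le hq2' (min_le_right _ _)
      rw [abs_lt] at h
      have hm1 := min_le_left (c - lo) (hi - c)
      have hm2 := min_le_right (c - lo) (hi - c)
      constructor
      · linarith [h.1]
      · linarith [h.2]
    have hsign : ∀ u ∈ Set.Icc (0:ℝ) (q.1 ^ 2), 0 ≤ phi2 k (u, q.2) := by
      intro u hu
      apply le_of_lt
      apply hball
      rw [Metric.mem_ball, Prod.dist_eq, max_lt_iff]
      constructor
      · rw [Real.dist_eq, sub_zero, abs_of_nonneg hu.1]
        exact lt_of_le_of_lt hu.2 hx2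
      · rw [Real.dist_eq]
        exact hy2ε
    have hmain := Hmono k q.2 (q.1 ^ 2) (sq_nonneg _) hsign
    calc f (0, c) = gk k c := hf0 c
      _ ≤ gk k q.2 := hy1 q.2 hyio
      _ = ∏ j ∈ Finset.Icc 1 k, (q.2 * (0 + (j:ℝ)) - 1) := by simp [gk]
      _ ≤ ∏ j ∈ Finset.Icc 1 k, (q.2 * (q.1 ^ 2 + (j:ℝ)) - 1) := hmain
      _ = f q := (hf q).symm
  · -- local maximum case
    left
    have hy1 := local_max_1d hgkdiff hgkderivcont h1 h2 hglo hghi hpos huniq'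
    have hval : phi2 k (0, c) < 0 := by
      rw [phi2_val k c hc]
      nlinarith [mul_pos (mul_pos hkpos hpos) hcpos]
    have hopen : IsOpen {q : ℝ × ℝ | phi2 k q < 0} :=
      isOpen_lt (phi2_continuous k) continuous_const
    obtain ⟨ε, hε, hball⟩ := Metric.isOpen_iff.1 hopen (0, c) hval
    set r := min (Real.sqrt ε) (min ε (min (c - lo) (hi - c))) with hr
    have hrpos : 0 < r :=
      lt_min (Real.sqrt_pos.2 hε) (lt_min hε (lt_min (by linarith) (by linarith)))
    apply Filter.eventually_of_mem (Metric.ball_mem_nhds _ hrpos)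
    intro q hq
    rw [Metric.mem_ball, Prod.dist_eq, max_lt_iff] at hq
    obtain ⟨hq1, hq2⟩ := hq
    have hq1' : |q.1| < Real.sqrt ε := by
      rw [Real.dist_eq, sub_zero] at hq1
      exact lt_of_lt_of_le hq1 (min_le_left _ _)
    have hq2' : |q.2 - c| < min ε (min (c - lo) (hi - c)) := by
      rw [Real.dist_eq] at hq2
      exact lt_of_lt_of_le hq2 (min_le_right _ _)
    have hx2 : q.1 ^ 2 < ε := by
      have h := pow_lt_pow_left₀ hq1' (abs_nonneg q.1) (n := 2) (by norm_num)
      rw [sq_abs, Real.sq_sqrt hε.le] at h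
      exact h
    have hy2ε : |q.2 - c| < ε := lt_of_lt_of_le hq2' (min_le_left _ _)
    have hyio : q.2 ∈ Set.Ioo lo hi := by
      have h := lt_of_lt_of_le hq2' (min_le_right _ _)
      rw [abs_lt] at h
      have hm1 := min_le_left (c - lo) (hi - c)
      have hm2 := min_le_right (c - lo) (hi - c)
      constructor
      · linarith [h.1]
      · linarith [h.2]
    have hsign : ∀ u ∈ Set.Icc (0:ℝ) (q.1 ^ 2), phi2 k (u, q.2) ≤ 0 := by
      intro u hu
      apply le_of_lt
      apply hball
      rw [Metric.mem_ball, Prod.dist_eq, max_lt_iff]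
      constructor
      · rw [Real.dist_eq, sub_zero, abs_of_nonneg hu.1]
        exact lt_of_le_of_lt hu.2 hx2
      · rw [Real.dist_eq]
        exact hy2ε
    have hmain := Hanti k q.2 (q.1 ^ 2) (sq_nonneg _) hsign
    calc f q = ∏ j ∈ Finset.Icc 1 k, (q.2 * (q.1 ^ 2 + (j:ℝ)) - 1) := hf q
      _ ≤ ∏ j ∈ Finset.Icc 1 k, (q.2 * (0 + (j:ℝ)) - 1) := hmain
      _ = gk k q.2 := by simp [gk]
      _ ≤ gk k c := hy1 q.2 hyio
      _ = f (0, c) := (hf0 c).symm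

end KCritAux

theorem k_sub_one_extrema_no_other_critical_points
    (k : ℕ) (hk : 1 ≤ k) (f : ℝ × ℝ → ℝ)
    (hf : ∀ p : ℝ × ℝ, f p = ∏ j ∈ Finset.Icc 1 k, (p.2 * (p.1 ^ 2 + (j : ℝ)) - 1)) :
    {p : ℝ × ℝ | IsCritPt f p}.Finite ∧
    {p : ℝ × ℝ | IsCritPt f p}.ncard = k - 1 ∧
    ∀ p : ℝ × ℝ, IsCritPt f p → IsLocalMax f p ∨ IsLocalMin f p := by
  open KCritAux in
  obtain ⟨hfin, hncard, hstruct⟩ := KCritAux.main_count k hk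
  have hset : {p : ℝ × ℝ | IsCritPt f p} = (fun c => ((0:ℝ), c)) '' KCritAux.Zset k := by
    ext p
    rcases p with ⟨a, b⟩
    simp only [Set.mem_setOf_eq, Set.mem_image]
    rw [KCritAux.crit_iff k hk f hf a b]
    constructor
    · rintro ⟨rfl, hb⟩
      exact ⟨b, hb, rfl⟩
    · rintro ⟨c, hc, heq⟩
      obtain ⟨h1, h2⟩ := Prod.mk.injEq _ _ _ _ ▸ heq
      exact ⟨h1.symm, h2 ▸ hc⟩
  have hinj : Function.Injective (fun c : ℝ => ((0:ℝ), c)) := by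
    intro x y h
    exact congrArg Prod.snd h
  refine ⟨?_, ?_, ?_⟩
  · rw [hset]
    exact hfin.image _
  · rw [hset, Set.ncard_image_of_injective _ hinj]
    exact hncard
  · intro p hp
    rcases p with ⟨a, b⟩
    obtain ⟨rfl, hb⟩ := (KCritAux.crit_iff k hk f hf a b).1 hp
    have hbZ : b ∈ KCritAux.Zset k := hb
    obtain ⟨lo, hi, hlo0, h1, h2, hglo, hghi, hgc, huniq⟩ := hstruct b hbZ
    exact KCritAux.extremum k hk f hf b lo hi hlo0 h1 h2 hglo hghi hgc hb huniq
end

section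
/- Let f(x,y) = (xy² − y − 1)² + (y² − 1)². Then f has exactly two critical points, namely (2, 1) and (0, −1), and both are local minima of f (indeed both are absolute minima, with f(2,1) = f(0,−1) = 0). -/
lemma derivX (f : ℝ × ℝ → ℝ)
    (hf : ∀ p : ℝ × ℝ, f p = (p.1 * p.2 ^ 2 - p.2 - 1) ^ 2 + (p.2 ^ 2 - 1) ^ 2)
    (a b : ℝ) : deriv (fun x => f (x, b)) a = 2 * (a * b ^ 2 - b - 1) * b ^ 2 := by
  have h : (fun x => f (x, b)) = fun x : ℝ => (x * b ^ 2 - b - 1) ^ 2 + (b ^ 2 - 1) ^ 2 := by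
    funext x; exact hf (x, b)
  rw [h]
  have h1 : HasDerivAt (fun x : ℝ => x * b ^ 2 - b - 1) (b ^ 2) a := by
    simpa using (((hasDerivAt_id a).mul_const (b ^ 2)).sub_const b).sub_const 1
  have h2 := (h1.pow 2).add_const ((b ^ 2 - 1) ^ 2)
  rw [HasDerivAt.deriv (f := fun x : ℝ => (x * b ^ 2 - b - 1) ^ 2 + (b ^ 2 - 1) ^ 2) h2]; ring

lemma derivY (f : ℝ × ℝ → ℝ)
    (hf : ∀ p : ℝ × ℝ, f p = (p.1 * p.2 ^ 2 - p.2 - 1) ^ 2 + (p.2 ^ 2 - 1) ^ 2)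
    (a b : ℝ) : deriv (fun y => f (a, y)) b =
      2 * (a * b ^ 2 - b - 1) * (2 * a * b - 1) + 2 * (b ^ 2 - 1) * (2 * b) := by
  have h : (fun y => f (a, y)) = fun y : ℝ => (a * y ^ 2 - y - 1) ^ 2 + (y ^ 2 - 1) ^ 2 := by
    funext y; exact hf (a, y)
  rw [h]
  have h1 : HasDerivAt (fun y : ℝ => a * y ^ 2 - y - 1) (a * (2 * b) - 1) b := by
    simpa using ((((hasDerivAt_id b).pow 2).const_mul a).sub (hasDerivAt_id b)).sub_const 1
  have h2 : HasDerivAt (fun y : ℝ => y ^ 2 - 1) (2 * b) b := by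
    simpa using ((hasDerivAt_id b).pow 2).sub_const 1
  have h3 := (h1.pow 2).add (h2.pow 2)
  rw [HasDerivAt.deriv (f := fun y : ℝ => (a * y ^ 2 - y - 1) ^ 2 + (y ^ 2 - 1) ^ 2) h3]; ring

theorem two_absolute_minima_no_other_critical_points
    (f : ℝ × ℝ → ℝ)
    (hf : ∀ p : ℝ × ℝ, f p = (p.1 * p.2 ^ 2 - p.2 - 1) ^ 2 + (p.2 ^ 2 - 1) ^ 2) :
    {p : ℝ × ℝ | IsCritPt f p} = {((2 : ℝ), (1 : ℝ)), ((0 : ℝ), (-1 : ℝ))} ∧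
    IsLocalMin f ((2 : ℝ), (1 : ℝ)) ∧ IsLocalMin f ((0 : ℝ), (-1 : ℝ)) ∧
    f ((2 : ℝ), (1 : ℝ)) = 0 ∧ f ((0 : ℝ), (-1 : ℝ)) = 0 ∧
    ∀ q : ℝ × ℝ, 0 ≤ f q := by
  have hnn : ∀ q : ℝ × ℝ, 0 ≤ f q := by
    intro q; rw [hf]; positivity
  have hf1 : f ((2 : ℝ), (1 : ℝ)) = 0 := by rw [hf]; norm_num
  have hf2 : f ((0 : ℝ), (-1 : ℝ)) = 0 := by rw [hf]; norm_num
  refine ⟨?_, ?_, ?_, hf1, hf2, hnn⟩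
  · ext ⟨a, b⟩
    simp only [Set.mem_setOf_eq, Set.mem_insert_iff, Set.mem_singleton_iff, Prod.mk.injEq,
      IsCritPt, derivX f hf, derivY f hf]
    constructor
    · rintro ⟨h1, h2⟩
      by_cases hb : b = 0
      · exfalso; subst hb; norm_num at h2
      · have hA : a * b ^ 2 - b - 1 = 0 := by
          rcases mul_eq_zero.1 h1 with h | h
          · rcases mul_eq_zero.1 h with h' | h'
            · norm_num at h'
            · exact h'
          · exact absurd (pow_eq_zero_iff (by norm_num) |>.1 h) hb
        rw [hA] at h2
        have hb2 : b ^ 2 - 1 = 0 := by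
          have := mul_eq_zero.1 (by linarith : (2 * (b ^ 2 - 1)) * (2 * b) = 0)
          rcases this with h | h
          · linarith
          · exact absurd (by linarith : b = 0) hb
        have : b = 1 ∨ b = -1 := by
          rcases mul_self_eq_one_iff.1 (by nlinarith : b * b = 1) with h | h
          · exact Or.inl h
          · exact Or.inr h
        rcases this with h | h
        · left; subst h; constructor <;> nlinarith
        · right; subst h; constructor <;> nlinarith
    · rintro (⟨ha, hb⟩ | ⟨ha, hb⟩) <;> subst ha <;> subst hb <;> norm_num
  · apply IsMinOn.isLocalMin (s := Set.univ)
    · intro q _; rw [hf1]; exact hnn q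
    · exact Filter.univ_mem
  · apply IsMinOn.isLocalMin (s := Set.univ)
    · intro q _; rw [hf2]; exact hnn q
    · exact Filter.univ_mem
end
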